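/- Characteristic polynomial of the stable–block Jacobian J₁. For every integer m ≥ 1, let J₁ be the 4m × 4m real block matrix with m × m blocks J₁ = [[0, 0, I, 0], [0, 0, 0, I], [0, 0, 0, 2I], [−2I, 0, −2I, −2I]], where I is the m × m identity matrix and 0 the m × m zero matrix. Then det(J₁ − λ I_{4m}) = λ^m (λ³ + 2λ² + 4λ + 4)^m as polynomials in λ. (In the paper this is applied with m = n − 2, giving the restriction of the Jacobian of the ring-state system to the subspace L₁.) -/

import Mathlib

open Polynomial

open Kronecker in
lemma J1_aux (m : ℕ) :
    (Matrix.kroneckerMap (· * ·)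
        (!![0, 0, 1, 0; 0, 0, 0, 1; 0, 0, 0, 2; -2, 0, -2, -2] :
          Matrix (Fin 4) (Fin 4) ℝ)
        (1 : Matrix (Fin m) (Fin m) ℝ)).map Polynomial.C -
      (Polynomial.X : ℝ[X]) • 1 =
    Matrix.kroneckerMap (· * ·)
      ((!![0, 0, 1, 0; 0, 0, 0, 1; 0, 0, 0, 2; -2, 0, -2, -2] :
          Matrix (Fin 4) (Fin 4) ℝ).map Polynomial.C - (Polynomial.X : ℝ[X]) • 1)
      (1 : Matrix (Fin m) (Fin m) ℝ[X]) := by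
  ext ⟨i, j⟩ ⟨k, l⟩
  simp only [Matrix.sub_apply, Matrix.map_apply, Matrix.kroneckerMap_apply,
    Matrix.smul_apply, Matrix.one_apply, Prod.mk.injEq, smul_eq_mul]
  by_cases hjl : j = l <;> by_cases hik : i = k <;>
    simp [hjl, hik, Matrix.one_apply] <;> ring

/-- Characteristic polynomial of the stable-block Jacobian `J₁`: the `4m × 4m` block matrix
with `m × m` blocks `[[0,0,I,0],[0,0,0,I],[0,0,0,2I],[-2I,0,-2I,-2I]]` (realized as the
Kronecker product of the `4 × 4` coefficient matrix with the `m × m` identity) satisfies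
`det(J₁ - λ I) = λ^m (λ³ + 2λ² + 4λ + 4)^m`. -/
theorem J1_charpoly (m : ℕ) (hm : 1 ≤ m) :
    Matrix.det
        ((Matrix.kroneckerMap (· * ·)
            (!![0, 0, 1, 0; 0, 0, 0, 1; 0, 0, 0, 2; -2, 0, -2, -2] :
              Matrix (Fin 4) (Fin 4) ℝ)
            (1 : Matrix (Fin m) (Fin m) ℝ)).map Polynomial.C -
          (Polynomial.X : ℝ[X]) • 1) =
      Polynomial.X ^ m *
        (Polynomial.X ^ 3 + 2 * Polynomial.X ^ 2 + 4 * Polynomial.X + 4) ^ m := by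
  rw [J1_aux]
  rw [Matrix.det_kronecker, Matrix.det_one, one_pow, mul_one]
  have hdet : Matrix.det
      ((!![0, 0, 1, 0; 0, 0, 0, 1; 0, 0, 0, 2; -2, 0, -2, -2] :
          Matrix (Fin 4) (Fin 4) ℝ).map Polynomial.C - (Polynomial.X : ℝ[X]) • 1) =
      Polynomial.X * (Polynomial.X ^ 3 + 2 * Polynomial.X ^ 2 + 4 * Polynomial.X + 4) := by
    simp [Matrix.det_succ_row_zero, Fin.sum_univ_succ, Matrix.one_apply, map_ofNat]
    simp [Fin.succAbove, Polynomial.C_ofNat]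
    ring
  rw [hdet, mul_pow, Fintype.card_fin]
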